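/- Let m ≥ 1 and let X₁, …, X_m be elements of a commutative ring. The determinant of the 2m×2m matrix [A₁; A₂] with A₁ = [Xᵢ^{j−1}] and A₂ = [j·Xᵢ^{j−1}] is, up to the sign (−1)^{m(m−1)/2}, equal to (∏ᵢ Xᵢ) times the square of the square of the Vandermonde determinant: det A = (−1)^{m(m−1)/2} (∏_{i=1}^m Xᵢ) · (det V)⁴ where V = [Xᵢ^{j−1}]_{1≤i,j≤m}. -/

import Mathlib

open Matrix Finset Polynomial

private lemma prod_Ioi_fin_aux {M : Type*} [CommMonoid M] {n : ℕ} (f : ℕ → M) (i : Fin n) :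
    ∏ j ∈ Finset.Ioi i, f (j : ℕ) = ∏ j ∈ Finset.Ico ((i : ℕ) + 1) n, f j := by
  have h : Finset.Ioo (i : ℕ) n = Finset.Ico ((i : ℕ) + 1) n := by
    have := i.isLt
    ext k; simp only [Finset.mem_Ioo, Finset.mem_Ico]; omega
  rw [← h, ← Fin.map_valEmbedding_Ioi, Finset.prod_map]
  rfl

private lemma det_rowop {R : Type*} [CommRing R] (m : ℕ)
    (M : Matrix (Fin (2 * m)) (Fin (2 * m)) R) (c : ℕ → R) :
    (Matrix.of fun i j : Fin (2 * m) =>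
      if (i : ℕ) < m then M i j
      else c ((i : ℕ) - m) * M i j + M ⟨(i : ℕ) - m, by have := i.isLt; omega⟩ j).det
    = (∏ i ∈ Finset.range m, c i) * M.det := by
  classical
  set L : Matrix (Fin (2 * m)) (Fin (2 * m)) R := Matrix.of fun i k =>
    if (k : ℕ) = (i : ℕ) then (if (i : ℕ) < m then 1 else c ((i : ℕ) - m))
    else if m ≤ (i : ℕ) ∧ (k : ℕ) = (i : ℕ) - m then 1 else 0 with hL
  have hmul : (Matrix.of fun i j : Fin (2 * m) =>
      if (i : ℕ) < m then M i j
      else c ((i : ℕ) - m) * M i j + M ⟨(i : ℕ) - m, by have := i.isLt; omega⟩ j) = L * M := by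
    ext i j
    rw [Matrix.mul_apply, Matrix.of_apply]
    by_cases h : (i : ℕ) < m
    · rw [if_pos h, Finset.sum_eq_single i]
      · simp [hL, h]
      · intro k _ hk
        have hk' : (k : ℕ) ≠ (i : ℕ) := fun hh => hk (Fin.ext hh)
        simp [hL, hk', h]
      · simp
    · rw [if_neg h]
      set i' : Fin (2 * m) := ⟨(i : ℕ) - m, by have := i.isLt; omega⟩ with hi'
      have hne : i' ≠ i := by
        intro hh
        have : (i' : ℕ) = (i : ℕ) := by rw [hh]
        simp only [hi'] at this
        omega
      have key : ∀ k, L i k * M k j =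
          (if k = i then c ((i : ℕ) - m) * M i j else 0) +
          (if k = i' then M i' j else 0) := by
        intro k
        by_cases hk1 : k = i
        · subst hk1
          simp [hL, h, Ne.symm hne]
        · by_cases hk2 : k = i'
          · subst hk2
            have h1 : ((i':ℕ)) ≠ (i : ℕ) := fun hh => hne (Fin.ext hh)
            simp [hL, hk1, h1, le_of_not_gt h, hi', Fin.ext_iff,
              show (i : ℕ) - m ≠ (i : ℕ) by have := i.isLt; omega]
          · have h1 : (k : ℕ) ≠ (i : ℕ) := fun hh => hk1 (Fin.ext hh)
            have h2 : (k : ℕ) ≠ (i : ℕ) - m := fun hh => hk2 (Fin.ext hh)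
            simp [hL, hk1, hk2, h1, h2]
      rw [Finset.sum_congr rfl fun k _ => key k, Finset.sum_add_distrib,
        Finset.sum_ite_eq' Finset.univ i, Finset.sum_ite_eq' Finset.univ i']
      simp
  have hLdet : L.det = ∏ i ∈ Finset.range m, c i := by
    have htri : L.BlockTriangular OrderDual.toDual := by
      intro i k hik
      have hik' : (i : ℕ) < (k : ℕ) := hik
      have h1 : (k : ℕ) ≠ (i : ℕ) := by omega
      have h2 : ¬(m ≤ (i : ℕ) ∧ (k : ℕ) = (i : ℕ) - m) := by omega
      simp [hL, h1, h2]
    rw [Matrix.det_of_lowerTriangular L htri]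
    have hdiag : ∀ i : Fin (2 * m), L i i =
        (fun n => if n < m then 1 else c (n - m)) (i : ℕ) := by
      intro i; simp [hL]
    rw [Finset.prod_congr rfl fun i _ => hdiag i,
      Fin.prod_univ_eq_prod_range (fun n => if n < m then 1 else c (n - m)) (2 * m)]
    rw [Finset.range_eq_Ico, ← Finset.prod_Ico_consecutive _ (Nat.zero_le m) (by omega : m ≤ 2 * m)]
    rw [← Finset.range_eq_Ico]
    have h1 : ∏ n ∈ Finset.range m, (if n < m then (1 : R) else c (n - m)) = 1 := by
      apply Finset.prod_eq_one
      intro n hn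
      rw [if_pos (Finset.mem_range.mp hn)]
    have h2 : ∏ n ∈ Finset.Ico m (2 * m), (if n < m then (1 : R) else c (n - m))
        = ∏ i ∈ Finset.range m, c i := by
      rw [Finset.prod_Ico_eq_prod_range]
      have h2m : 2 * m - m = m := by omega
      rw [h2m]
      apply Finset.prod_congr rfl
      intro n _
      simp
    rw [h1, h2, one_mul]
  rw [hmul, Matrix.det_mul, hLdet]

-- Step 4 core: the vandermonde product split.
private lemma vand_split {S : Type*} [CommRing S] (m : ℕ) (y : ℕ → S) (t : S) :
    (∏ i : Fin (2 * m), ∏ j ∈ Finset.Ioi i,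
        ((fun n => if n < m then y n else y (n - m) + t) (j : ℕ)
          - (fun n => if n < m then y n else y (n - m) + t) (i : ℕ)))
    = t ^ m * ((∏ i ∈ Finset.range m, ∏ j ∈ Finset.Ico (i + 1) m, (y j - y i)) ^ 2 *
        ∏ i ∈ Finset.range m, ∏ j ∈ (Finset.range m).erase i, (y j + t - y i)) := by
  set w' : ℕ → S := fun n => if n < m then y n else y (n - m) + t with hw'
  set F : ℕ → S := fun n => ∏ j ∈ Finset.Ico (n + 1) (2 * m), (w' j - w' n) with hF
  set B : S := ∏ i ∈ Finset.range m, ∏ j ∈ Finset.Ico (i + 1) m, (y j - y i) with hB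
  have step1 : (∏ i : Fin (2 * m), ∏ j ∈ Finset.Ioi i, (w' (j : ℕ) - w' (i : ℕ)))
      = ∏ n ∈ Finset.range (2 * m), F n := by
    rw [← Fin.prod_univ_eq_prod_range F (2 * m)]
    exact Finset.prod_congr rfl fun i _ => prod_Ioi_fin_aux (fun n => w' n - w' (i : ℕ)) i
  have step2 : ∏ n ∈ Finset.range (2 * m), F n
      = (∏ n ∈ Finset.range m, F n) * ∏ n ∈ Finset.Ico m (2 * m), F n := by
    rw [Finset.range_eq_Ico, ← Finset.prod_Ico_consecutive F (Nat.zero_le m)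
      (by omega : m ≤ 2 * m), Nat.Ico_zero_eq_range]
  have part2 : ∏ n ∈ Finset.Ico m (2 * m), F n = B := by
    rw [Finset.prod_Ico_eq_prod_range]
    have h2m : 2 * m - m = m := by omega
    rw [h2m, hB]
    refine Finset.prod_congr rfl fun a ha => ?_
    have ha' : a < m := Finset.mem_range.mp ha
    have hmap : Finset.Ico (m + a + 1) (2 * m)
        = (Finset.Ico (a + 1) m).map (addLeftEmbedding m) := by
      rw [Finset.map_add_left_Ico]
      congr 1 <;> omega
    rw [hF]
    beta_reduce
    rw [hmap, Finset.prod_map]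
    refine Finset.prod_congr rfl fun b hb => ?_
    have hb' : a + 1 ≤ b ∧ b < m := Finset.mem_Ico.mp hb
    have e1 : w' (addLeftEmbedding m b) = y b + t := by
      simp only [addLeftEmbedding_apply, hw']
      rw [if_neg (by omega)]
      congr 2
      omega
    have e2 : w' (m + a) = y a + t := by
      simp only [hw']
      rw [if_neg (by omega)]
      congr 2
      omega
    rw [e1, e2, add_sub_add_right_eq_sub]
  have part1 : ∏ n ∈ Finset.range m, F n
      = B * ∏ i ∈ Finset.range m, ∏ b ∈ Finset.range m, (y b + t - y i) := by
    rw [← Finset.prod_mul_distrib]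
    refine Finset.prod_congr rfl fun n hn => ?_
    have hn' : n < m := Finset.mem_range.mp hn
    rw [hF]
    beta_reduce
    rw [← Finset.prod_Ico_consecutive (fun j => w' j - w' n)
      (by omega : n + 1 ≤ m) (by omega : m ≤ 2 * m)]
    congr 1
    · refine Finset.prod_congr rfl fun j hj => ?_
      have hj' : n + 1 ≤ j ∧ j < m := Finset.mem_Ico.mp hj
      simp only [hw']
      rw [if_pos hj'.2, if_pos hn']
    · rw [Finset.prod_Ico_eq_prod_range]
      have h2m : 2 * m - m = m := by omega
      rw [h2m]
      refine Finset.prod_congr rfl fun b _ => ?_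
      simp only [hw']
      rw [if_neg (by omega), if_pos hn']
      congr 3
      omega
  have part3 : ∏ i ∈ Finset.range m, ∏ b ∈ Finset.range m, (y b + t - y i)
      = t ^ m * ∏ i ∈ Finset.range m, ∏ j ∈ (Finset.range m).erase i, (y j + t - y i) := by
    have : ∀ i ∈ Finset.range m, ∏ b ∈ Finset.range m, (y b + t - y i)
        = t * ∏ j ∈ (Finset.range m).erase i, (y j + t - y i) := by
      intro i hi
      rw [← Finset.mul_prod_erase (Finset.range m) _ hi, add_sub_cancel_left]
    rw [Finset.prod_congr rfl this, Finset.prod_mul_distrib, Finset.prod_const,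
      Finset.card_range]
  rw [step1, step2, part2, part1, part3]
  ring

private lemma off_diag_sign {R : Type*} [CommRing R] (m : ℕ) (x : ℕ → R) :
    (∏ i ∈ Finset.range m, ∏ j ∈ (Finset.range m).erase i, (x j - x i))
    = (-1) ^ (m * (m - 1) / 2) *
      (∏ i ∈ Finset.range m, ∏ j ∈ Finset.Ico (i + 1) m, (x j - x i)) ^ 2 := by
  set Bx : R := ∏ i ∈ Finset.range m, ∏ j ∈ Finset.Ico (i + 1) m, (x j - x i) with hBx
  have hsplit : ∀ i ∈ Finset.range m,
      ∏ j ∈ (Finset.range m).erase i, (x j - x i)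
      = (∏ j ∈ Finset.range i, (x j - x i)) * ∏ j ∈ Finset.Ico (i + 1) m, (x j - x i) := by
    intro i hi
    have hi' : i < m := Finset.mem_range.mp hi
    have hset : (Finset.range m).erase i = Finset.range i ∪ Finset.Ico (i + 1) m := by
      ext k
      simp only [Finset.mem_erase, Finset.mem_range, Finset.mem_union, Finset.mem_Ico]
      omega
    have hdisj : Disjoint (Finset.range i) (Finset.Ico (i + 1) m) := by
      rw [Finset.disjoint_left]
      intro k hk1 hk2
      simp only [Finset.mem_range] at hk1
      simp only [Finset.mem_Ico] at hk2
      omega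
    rw [hset, Finset.prod_union hdisj]
  rw [Finset.prod_congr rfl hsplit, Finset.prod_mul_distrib, ← hBx]
  have hE : ∏ i ∈ Finset.range m, ∏ j ∈ Finset.range i, (x j - x i)
      = (-1) ^ (m * (m - 1) / 2) * Bx := by
    rw [Finset.prod_comm' (t' := Finset.range m) (s' := fun j => Finset.Ico (j + 1) m)
      (by intro i j; simp only [Finset.mem_range, Finset.mem_Ico]; omega)]
    have : ∀ j ∈ Finset.range m, ∏ i ∈ Finset.Ico (j + 1) m, (x j - x i)
        = (-1) ^ (m - (j + 1)) * ∏ i ∈ Finset.Ico (j + 1) m, (x i - x j) := by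
      intro j _
      calc ∏ i ∈ Finset.Ico (j + 1) m, (x j - x i)
          = ∏ i ∈ Finset.Ico (j + 1) m, ((-1) * (x i - x j)) :=
            Finset.prod_congr rfl fun i _ => by ring
        _ = (-1) ^ (m - (j + 1)) * ∏ i ∈ Finset.Ico (j + 1) m, (x i - x j) := by
            rw [Finset.prod_mul_distrib, Finset.prod_const, Nat.card_Ico]
    rw [Finset.prod_congr rfl this, Finset.prod_mul_distrib,
      Finset.prod_pow_eq_pow_sum]
    have hsum : ∑ j ∈ Finset.range m, (m - (j + 1)) = m * (m - 1) / 2 := by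
      have h1 : ∀ j ∈ Finset.range m, m - (j + 1) = m - 1 - j := by
        intro j _; omega
      rw [Finset.sum_congr rfl h1, Finset.sum_range_reflect (fun j => j) m,
        Finset.sum_range_id]
    rw [hsum, hBx]
  rw [hE]; ring

theorem det_confluent_vandermonde_pow_four {R : Type*} [CommRing R] (m : ℕ) (hm : 1 ≤ m)
    (X : Fin m → R) :
    Matrix.det (Matrix.of fun i j : Fin (2 * m) =>
      if h : (i : ℕ) < m then X ⟨i, h⟩ ^ (j : ℕ)
      else (((j : ℕ) + 1 : ℕ) : R) * X ⟨(i : ℕ) - m, by have := i.isLt; omega⟩ ^ (j : ℕ))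
    = (-1) ^ (m * (m - 1) / 2) * (∏ i, X i) *
        (Matrix.det (Matrix.of fun i j : Fin m => X i ^ (j : ℕ))) ^ 4 := by
  classical
  set x : ℕ → R := fun n => if h : n < m then X ⟨n, h⟩ else 0 with hx
  have hXx : ∀ (n : ℕ) (h : n < m), X ⟨n, h⟩ = x n := by
    intro n h; rw [hx]; simp [h]
  -- the confluent matrix
  set Cm : Matrix (Fin (2 * m)) (Fin (2 * m)) R := Matrix.of fun i j =>
    if (i : ℕ) < m then x (i : ℕ) ^ (j : ℕ)
    else ((j : ℕ) : R) * x ((i : ℕ) - m) ^ ((j : ℕ) - 1) with hCm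
  -- Step A : statement matrix = row-op of Cm
  have stepA : Matrix.det (Matrix.of fun i j : Fin (2 * m) =>
      if h : (i : ℕ) < m then X ⟨i, h⟩ ^ (j : ℕ)
      else (((j : ℕ) + 1 : ℕ) : R) * X ⟨(i : ℕ) - m, by have := i.isLt; omega⟩ ^ (j : ℕ))
      = (∏ i ∈ Finset.range m, x i) * Cm.det := by
    rw [← det_rowop m Cm x]
    congr 1
    ext i j
    rw [Matrix.of_apply, Matrix.of_apply]
    by_cases h : (i : ℕ) < m
    · rw [dif_pos h, if_pos h, hCm, Matrix.of_apply, if_pos h, hXx]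
    · have him : (i : ℕ) - m < m := by have := i.isLt; omega
      rw [dif_neg h, if_neg h, hXx _ him, hCm, Matrix.of_apply, Matrix.of_apply, if_neg h,
        if_pos him]
      obtain ⟨n, hn⟩ : ∃ n : ℕ, (j : ℕ) = n := ⟨j, rfl⟩
      rw [hn]
      cases n with
      | zero => simp
      | succ k =>
        push_cast
        ring
  -- polynomial ring part
  set y : ℕ → Polynomial R := fun n => Polynomial.C (x n) with hy
  set N : Matrix (Fin (2 * m)) (Fin (2 * m)) (Polynomial R) := Matrix.of fun i j =>
    if (i : ℕ) < m then y (i : ℕ) ^ (j : ℕ)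
    else ∑ k ∈ Finset.range (j : ℕ),
      (y ((i : ℕ) - m) + Polynomial.X) ^ k * y ((i : ℕ) - m) ^ ((j : ℕ) - 1 - k) with hN
  set w : Fin (2 * m) → Polynomial R := fun i =>
    if (i : ℕ) < m then y (i : ℕ) else y ((i : ℕ) - m) + Polynomial.X with hw
  have hW : Matrix.vandermonde w = Matrix.of (fun i j : Fin (2 * m) =>
      if (i : ℕ) < m then N i j
      else (fun _ : ℕ => (Polynomial.X : Polynomial R)) ((i : ℕ) - m) * N i j
        + N ⟨(i : ℕ) - m, by have := i.isLt; omega⟩ j) := by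
    refine Matrix.ext fun i j => ?_
    rw [Matrix.vandermonde_apply, Matrix.of_apply]
    by_cases h : (i : ℕ) < m
    · rw [if_pos h, hN, Matrix.of_apply, if_pos h, hw]
      simp [h]
    · have him : (i : ℕ) - m < m := by have := i.isLt; omega
      rw [if_neg h, hN, Matrix.of_apply, Matrix.of_apply, if_neg h, if_pos him, hw]
      simp only [if_neg h]
      have hg := geom_sum₂_mul (y ((i : ℕ) - m) + Polynomial.X) (y ((i : ℕ) - m)) (j : ℕ)
      rw [add_sub_cancel_left] at hg
      linear_combination -hg
  have h1 : (Matrix.vandermonde w).det = Polynomial.X ^ m * N.det := by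
    rw [hW, det_rowop m N (fun _ => (Polynomial.X : Polynomial R)), Finset.prod_const,
      Finset.card_range]
  have h2 : (Matrix.vandermonde w).det
      = Polynomial.X ^ m *
        ((∏ i ∈ Finset.range m, ∏ j ∈ Finset.Ico (i + 1) m, (y j - y i)) ^ 2 *
          ∏ i ∈ Finset.range m, ∏ j ∈ (Finset.range m).erase i,
            (y j + Polynomial.X - y i)) := by
    rw [Matrix.det_vandermonde, ← vand_split m y Polynomial.X]
  have h3 : N.det = (∏ i ∈ Finset.range m, ∏ j ∈ Finset.Ico (i + 1) m, (y j - y i)) ^ 2 *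
      ∏ i ∈ Finset.range m, ∏ j ∈ (Finset.range m).erase i, (y j + Polynomial.X - y i) := by
    apply (Polynomial.isRegular_X_pow m).left
    show Polynomial.X ^ m * N.det = _
    rw [← h1, h2]
  -- evaluation at 0
  set ev : Polynomial R →+* R := Polynomial.evalRingHom (0 : R) with hev
  have hevy : ∀ n, ev (y n) = x n := by intro n; simp [hev, hy]
  have hNC : N.map ev = Cm := by
    ext i j
    rw [Matrix.map_apply, hN, hCm, Matrix.of_apply, Matrix.of_apply]
    by_cases h : (i : ℕ) < m
    · rw [if_pos h, if_pos h, map_pow, hevy]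
    · rw [if_neg h, if_neg h, map_sum]
      have hterm : ∀ k ∈ Finset.range (j : ℕ),
          ev ((y ((i : ℕ) - m) + Polynomial.X) ^ k * y ((i : ℕ) - m) ^ ((j : ℕ) - 1 - k))
          = x ((i : ℕ) - m) ^ ((j : ℕ) - 1) := by
        intro k hk
        have hk' : k < (j : ℕ) := Finset.mem_range.mp hk
        simp only [hev, hy, Polynomial.coe_evalRingHom, _root_.map_mul, map_pow,
          _root_.map_add, Polynomial.eval_C, Polynomial.eval_X, add_zero]
        rw [← pow_add]
        congr 1
        omega
      rw [Finset.sum_congr rfl hterm, Finset.sum_const, Finset.card_range, nsmul_eq_mul]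
  have hCmdet : Cm.det = ev N.det := by
    rw [RingHom.map_det]
    congr 1
    rw [RingHom.mapMatrix_apply, hNC]
  have h4 : Cm.det =
      (∏ i ∈ Finset.range m, ∏ j ∈ Finset.Ico (i + 1) m, (x j - x i)) ^ 2 *
        ∏ i ∈ Finset.range m, ∏ j ∈ (Finset.range m).erase i, (x j - x i) := by
    rw [hCmdet, h3, _root_.map_mul, map_pow, map_prod, map_prod]
    congr 1
    · congr 1
      refine Finset.prod_congr rfl fun i _ => ?_
      rw [map_prod]
      refine Finset.prod_congr rfl fun j _ => ?_
      simp only [hev, hy, Polynomial.coe_evalRingHom, map_sub, Polynomial.eval_C]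
    · refine Finset.prod_congr rfl fun i _ => ?_
      rw [map_prod]
      refine Finset.prod_congr rfl fun j _ => ?_
      simp only [hev, hy, Polynomial.coe_evalRingHom, map_sub, _root_.map_add,
        Polynomial.eval_C, Polynomial.eval_X, add_zero]
  -- the small Vandermonde
  have h7 : Matrix.det (Matrix.of fun i j : Fin m => X i ^ (j : ℕ))
      = ∏ i ∈ Finset.range m, ∏ j ∈ Finset.Ico (i + 1) m, (x j - x i) := by
    have : (Matrix.of fun i j : Fin m => X i ^ (j : ℕ)) = Matrix.vandermonde X := rfl
    rw [this, Matrix.det_vandermonde]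
    have step : ∀ i : Fin m, ∏ j ∈ Finset.Ioi i, (X j - X i)
        = ∏ j ∈ Finset.Ico ((i : ℕ) + 1) m, (x j - x (i : ℕ)) := by
      intro i
      rw [← prod_Ioi_fin_aux (fun n => x n - x (i : ℕ)) i]
      refine Finset.prod_congr rfl fun j _ => ?_
      rw [hXx _ j.isLt, hXx _ i.isLt]
    rw [Finset.prod_congr rfl fun i _ => step i,
      ← Fin.prod_univ_eq_prod_range (fun n => ∏ j ∈ Finset.Ico (n + 1) m, (x j - x n)) m]
  have h8 : (∏ i, X i) = ∏ i ∈ Finset.range m, x i := by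
    rw [← Fin.prod_univ_eq_prod_range x m]
    exact Finset.prod_congr rfl fun i _ => hXx _ i.isLt
  rw [stepA, h4, off_diag_sign, h7, h8]
  ring
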